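/- For every integer k ≥ 7, 1 − e^{−k}·∑_{n=0}^{8k−1} k^n/n! ≤ 1/(17·k² + 1). -/

import Mathlib

open Nat
set_option maxHeartbeats 1000000

/-- For every integer `k ≥ 7`, the probability that a Poisson random variable with
parameter `k` is at least `8k` satisfies
`1 - e^{-k}·∑_{n=0}^{8k-1} k^n/n! ≤ 1/(17·k² + 1)`. -/
theorem poisson_upper_tail_le (k : ℕ) (hk : 7 ≤ k) :
    1 - Real.exp (-(k : ℝ)) *
        ∑ n ∈ Finset.range (8 * k), (k : ℝ) ^ n / (Nat.factorial n : ℝ) ≤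
      1 / (17 * (k : ℝ) ^ 2 + 1) := by
  have hk1 : (1:ℝ) ≤ k := by exact_mod_cast (by omega : 1 ≤ k)
  have hk0 : (0:ℝ) ≤ k := by linarith
  set K : ℝ := (k:ℝ) with hK
  -- exp as sum of the series
  have hsum : HasSum (fun n : ℕ => K ^ n / n !) (Real.exp K) := by
    rw [Real.exp_eq_exp_ℝ]; exact NormedSpace.expSeries_div_hasSum_exp K
  have hs : Summable (fun n : ℕ => K ^ n / n !) := hsum.summable
  have hsplit : ∑ n ∈ Finset.range (8 * k), K ^ n / n !
      + ∑' j : ℕ, K ^ (j + 8 * k) / (j + 8 * k)! = Real.exp K := by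
    rw [← hsum.tsum_eq]
    exact Summable.sum_add_tsum_nat_add (8 * k) hs
  -- bound tail terms by geometric
  have hterm : ∀ j : ℕ, K ^ (j + 8 * k) / ((j + 8 * k)! : ℝ)
      ≤ K ^ (8 * k) / ((8 * k)! : ℝ) * (1/8) ^ j := by
    intro j
    induction j with
    | zero => simp
    | succ i ih =>
        have h1 : K ^ (i + 1 + 8 * k) / ((i + 1 + 8 * k)! : ℝ)
            = K ^ (i + 8 * k) / ((i + 8 * k)! : ℝ) * (K / (i + 8 * k + 1)) := by
          have : (i + 1 + 8 * k) = (i + 8 * k) + 1 := by omega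
          rw [this, Nat.factorial_succ, pow_succ]
          push_cast
          have hfpos : (0:ℝ) < ((i + 8 * k)! : ℝ) := by positivity
          field_simp
        rw [h1]
        have hfrac : K / ((i:ℝ) + 8 * k + 1) ≤ 1/8 := by
          rw [div_le_div_iff₀ (by positivity) (by norm_num)]
          have : (8:ℝ) * K ≤ 8 * k := le_refl _
          push_cast
          nlinarith [Nat.cast_nonneg (α := ℝ) i]
        have hnn : (0:ℝ) ≤ K ^ (i + 8 * k) / ((i + 8 * k)! : ℝ) := by positivity
        calc K ^ (i + 8 * k) / ((i + 8 * k)! : ℝ) * (K / (↑i + 8 * ↑k + 1))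
            ≤ (K ^ (8 * k) / ((8 * k)! : ℝ) * (1/8) ^ i) * (1/8) := by
              apply mul_le_mul ih hfrac (by positivity)
              positivity
          _ = K ^ (8 * k) / ((8 * k)! : ℝ) * (1/8) ^ (i + 1) := by ring
  have htail : ∑' j : ℕ, K ^ (j + 8 * k) / ((j + 8 * k)! : ℝ)
      ≤ K ^ (8 * k) / ((8 * k)! : ℝ) * (8/7) := by
    have hg : Summable (fun j : ℕ => K ^ (8 * k) / ((8 * k)! : ℝ) * (1/8:ℝ) ^ j) := by
      apply Summable.mul_left
      exact summable_geometric_of_lt_one (by norm_num) (by norm_num)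
    calc ∑' j : ℕ, K ^ (j + 8 * k) / ((j + 8 * k)! : ℝ)
        ≤ ∑' j : ℕ, K ^ (8 * k) / ((8 * k)! : ℝ) * (1/8:ℝ) ^ j := by
          apply Summable.tsum_le_tsum hterm _ hg
          exact (summable_nat_add_iff (8*k)).mpr hs
      _ = K ^ (8 * k) / ((8 * k)! : ℝ) * ∑' j : ℕ, (1/8:ℝ) ^ j := tsum_mul_left
      _ = K ^ (8 * k) / ((8 * k)! : ℝ) * (8/7) := by
          rw [tsum_geometric_of_lt_one (by norm_num) (by norm_num)]
          norm_num
  -- rewrite LHS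
  have hLHS : 1 - Real.exp (-K) * ∑ n ∈ Finset.range (8 * k), K ^ n / n !
      ≤ Real.exp (-K) * (K ^ (8 * k) / ((8 * k)! : ℝ) * (8/7)) := by
    have h1 : Real.exp (-K) * Real.exp K = 1 := by
      rw [← Real.exp_add]; simp
    have h2 : 1 - Real.exp (-K) * ∑ n ∈ Finset.range (8 * k), K ^ n / n !
        = Real.exp (-K) * ∑' j : ℕ, K ^ (j + 8 * k) / ((j + 8 * k)! : ℝ) := by
      rw [← h1, ← mul_sub]
      congr 1
      linarith [hsplit]
    rw [h2]
    exact mul_le_mul_of_nonneg_left htail (Real.exp_nonneg _)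
  refine hLHS.trans ?_
  -- now the numeric part
  -- (8K)^(8k) ≤ exp (8K) * (8k)!
  have hbig : K ^ (8 * k) / ((8 * k)! : ℝ) ≤ Real.exp (8 * K) / 8 ^ (8 * k) := by
    have hfe : (8 * K) ^ (8 * k) / ((8 * k)! : ℝ) ≤ Real.exp (8 * K) := by
      calc (8 * K) ^ (8 * k) / ((8 * k)! : ℝ)
          ≤ ∑ i ∈ Finset.range (8 * k + 1), (8 * K) ^ i / (i ! : ℝ) := by
            apply Finset.single_le_sum (f := fun i => (8*K)^i / (i ! : ℝ))
              (fun i _ => by positivity)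
            simp
        _ ≤ Real.exp (8 * K) := Real.sum_le_exp_of_nonneg (by positivity) _
    have h8 : (8 * K) ^ (8 * k) = 8 ^ (8 * k) * K ^ (8 * k) := by rw [mul_pow]
    rw [h8] at hfe
    rw [div_le_div_iff₀ (by positivity) (by positivity)]
    rw [div_le_iff₀ (by positivity)] at hfe
    nlinarith [pow_pos (show (0:ℝ) < 8 by norm_num) (8*k), pow_nonneg hk0 (8*k)]
  have hfinal : Real.exp (-K) * (Real.exp (8 * K) / 8 ^ (8 * k) * (8/7))
      ≤ 1 / (17 * K ^ 2 + 1) := by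
    have hexp7 : Real.exp (-K) * Real.exp (8 * K) = Real.exp 7 ^ k := by
      rw [← Real.exp_add, ← Real.exp_nat_mul]
      congr 1; ring
    have he7 : Real.exp 7 ≤ 1097 := by
      have h1 : Real.exp 1 ≤ 2.7182818286 := le_of_lt Real.exp_one_lt_d9
      have : Real.exp 7 = Real.exp 1 ^ 7 := by
        rw [← Real.exp_nat_mul]; norm_num
      rw [this]
      calc Real.exp 1 ^ 7 ≤ 2.7182818286 ^ 7 :=
            pow_le_pow_left₀ (Real.exp_nonneg 1) h1 7
        _ ≤ 1097 := by norm_num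
    have hpos : (0:ℝ) < 17 * K ^ 2 + 1 := by positivity
    have hE0 : (0:ℝ) ≤ Real.exp 7 := (Real.exp_pos 7).le
    have h8k : (8:ℝ) ^ (8 * k) = 16777216 ^ k := by
      rw [pow_mul]; norm_num
    have heq : Real.exp (-K) * (Real.exp (8 * K) / 8 ^ (8 * k) * (8/7))
        = Real.exp 7 ^ k * (8/7) / (16777216:ℝ) ^ k := by
      rw [← hexp7, h8k]
      ring
    rw [heq, div_le_div_iff₀ (by positivity) hpos]
    rw [one_mul]
    have t1 : Real.exp 7 ^ k ≤ (1097:ℝ) ^ k := pow_le_pow_left₀ hE0 he7 k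
    have t2 : K ^ 2 ≤ (4:ℝ) ^ k := by
      have h1 : k < 2 ^ k := Nat.lt_two_pow_self
      have h2 : K ≤ (2:ℝ) ^ k := by rw [hK]; exact_mod_cast h1.le
      have h3 : ((2:ℝ) ^ k) ^ 2 = (4:ℝ) ^ k := by
        rw [← pow_mul, mul_comm, pow_mul]; norm_num
      calc K ^ 2 ≤ ((2:ℝ) ^ k) ^ 2 := by nlinarith [pow_pos (show (0:ℝ) < 2 by norm_num) k]
        _ = (4:ℝ) ^ k := h3
    have t3 : (3823:ℝ) ≤ (3823:ℝ) ^ k := le_self_pow₀ (by norm_num) (by omega)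
    have t4 : (1097:ℝ) ^ k * ((4:ℝ) ^ k * (3823:ℝ) ^ k) ≤ (16777216:ℝ) ^ k := by
      rw [← mul_pow, ← mul_pow]
      apply pow_le_pow_left₀ (by norm_num) (by norm_num)
    have h4pos : (0:ℝ) < (4:ℝ) ^ k := by positivity
    have h1097 : (0:ℝ) < (1097:ℝ) ^ k := by positivity
    have harg : 17 * K ^ 2 + 1 ≤ 18 * (4:ℝ) ^ k := by
      have : (1:ℝ) ≤ (4:ℝ) ^ k := by
        calc (1:ℝ) = 1 ^ k := (one_pow k).symm
          _ ≤ (4:ℝ) ^ k := pow_le_pow_left₀ zero_le_one (by norm_num) k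
      nlinarith
    calc Real.exp 7 ^ k * (8/7) * (17 * K ^ 2 + 1)
        ≤ (1097:ℝ) ^ k * (8/7) * (18 * (4:ℝ) ^ k) := by
          have e1 : (0:ℝ) ≤ Real.exp 7 ^ k := by positivity
          have e2 : (0:ℝ) ≤ 17 * K ^ 2 + 1 := hpos.le
          nlinarith
      _ = (1097:ℝ) ^ k * ((4:ℝ) ^ k * (144/7)) := by ring
      _ ≤ (1097:ℝ) ^ k * ((4:ℝ) ^ k * (3823:ℝ) ^ k) := by
          apply mul_le_mul_of_nonneg_left _ h1097.le
          apply mul_le_mul_of_nonneg_left _ h4pos.le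
          linarith
      _ ≤ (16777216:ℝ) ^ k := t4
  calc Real.exp (-K) * (K ^ (8 * k) / ((8 * k)! : ℝ) * (8/7))
      ≤ Real.exp (-K) * (Real.exp (8 * K) / 8 ^ (8 * k) * (8/7)) := by
        apply mul_le_mul_of_nonneg_left _ (Real.exp_nonneg _)
        apply mul_le_mul_of_nonneg_right hbig (by norm_num)
    _ ≤ 1 / (17 * K ^ 2 + 1) := hfinal
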